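/- The algebra C(𝕋²) of continuous complex-valued functions on the torus 𝕋² = (ℝ/ℤ) × (ℝ/ℤ) is the universal C*-algebra generated by two commuting unitaries: for every unital C*-algebra B and every pair of unitaries u, v ∈ B with uv = vu, there exists a unique continuous unital star-algebra homomorphism φ : C(𝕋², ℂ) → B such that φ(e₁) = u and φ(e₂) = v, where e₁(s,t) = e^{2πis} and e₂(s,t) = e^{2πit} are the coordinate unitaries of C(𝕋², ℂ). -/

import Mathlib

open AddCircle

noncomputable section

instance : Fact ((0:ℝ) < 1) := ⟨one_pos⟩

/-- The torus `𝕋² = (ℝ/ℤ) × (ℝ/ℤ)`. -/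
abbrev Torus2 : Type := AddCircle (1:ℝ) × AddCircle (1:ℝ)

/-- The first coordinate unitary `e₁(s,t) = e^{2πis}` of `C(𝕋², ℂ)`. -/
def coordU1 : C(Torus2, ℂ) :=
  ⟨fun p => (toCircle p.1 : ℂ), by
    exact continuous_subtype_val.comp (continuous_toCircle.comp continuous_fst)⟩

/-- The second coordinate unitary `e₂(s,t) = e^{2πit}` of `C(𝕋², ℂ)`. -/
def coordU2 : C(Torus2, ℂ) :=
  ⟨fun p => (toCircle p.2 : ℂ), by
    exact continuous_subtype_val.comp (continuous_toCircle.comp continuous_snd)⟩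

lemma comm_star_aux {B : Type*} [Ring B] [StarRing B] (a b : B)
    (h1 : b * star b = 1) (h2 : star b * b = 1) (h3 : a * b = b * a) :
    a * star b = star b * a := by
  calc a * star b = (star b * b) * (a * star b) := by rw [h2, one_mul]
    _ = star b * (b * (a * star b)) := by rw [mul_assoc]
    _ = star b * ((b * a) * star b) := by rw [← mul_assoc b a]
    _ = star b * ((a * b) * star b) := by rw [← h3]
    _ = star b * (a * (b * star b)) := by rw [mul_assoc a b]
    _ = star b * a := by rw [h1, mul_one]

open scoped CStarAlgebra in
theorem statement16 {B : Type*} [NormedRing B] [StarRing B] [CStarRing B]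
    [NormedAlgebra ℂ B] [CompleteSpace B] [StarModule ℂ B]
    (u v : B) (hu : u ∈ unitary B) (hv : v ∈ unitary B) (huv : u * v = v * u) :
    ∃! φ : C(Torus2, ℂ) →⋆ₐ[ℂ] B,
      Continuous φ ∧ φ coordU1 = u ∧ φ coordU2 = v := by
  letI : CStarAlgebra B :=
    { ‹NormedRing B›, ‹StarRing B›, ‹CStarRing B›, ‹NormedAlgebra ℂ B›,
      ‹CompleteSpace B›, ‹StarModule ℂ B› with }
  have hu1 : star u * u = 1 := hu.1
  have hu2 : u * star u = 1 := hu.2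
  have hv1 : star v * v = 1 := hv.1
  have hv2 : v * star v = 1 := hv.2
  have hvu : v * u = u * v := huv.symm
  have hcomm : ∀ a ∈ ({u, v} : Set B), ∀ b ∈ ({u, v} : Set B), a * b = b * a := by
    rintro a (rfl | rfl) b (rfl | rfl)
    · rfl
    · exact huv
    · exact hvu
    · rfl
  have hcomm_star : ∀ a ∈ ({u, v} : Set B), ∀ b ∈ ({u, v} : Set B),
      a * star b = star b * a := by
    rintro a (rfl | rfl) b (rfl | rfl) <;>
      exact comm_star_aux _ _ (by first | exact hu2 | exact hv2)
        (by first | exact hu1 | exact hv1) (hcomm _ (by simp) _ (by simp))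
  let S₀ : StarSubalgebra ℂ B := StarAlgebra.adjoin ℂ ({u, v} : Set B)
  letI : CommRing S₀ := StarAlgebra.adjoinCommRingOfComm ℂ hcomm hcomm_star
  let S : StarSubalgebra ℂ B := S₀.topologicalClosure
  haveI hSclosed : IsClosed (S : Set B) := S₀.isClosed_topologicalClosure
  letI hCR : CommRing S := S₀.commRingTopologicalClosure fun x y => mul_comm x y
  letI : CommCStarAlgebra S :=
    { (StarSubalgebra.cstarAlgebra S) with mul_comm := hCR.mul_comm }
  have huS : u ∈ S :=
    S₀.le_topologicalClosure (StarAlgebra.subset_adjoin ℂ _ (by simp))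
  have hvS : v ∈ S :=
    S₀.le_topologicalClosure (StarAlgebra.subset_adjoin ℂ _ (by simp))
  set u' : S := ⟨u, huS⟩ with hu'
  set v' : S := ⟨v, hvS⟩ with hv'
  have hu'unit : star u' * u' = 1 := Subtype.ext hu1
  have hv'unit : star v' * v' = 1 := Subtype.ext hv1
  have hchar : ∀ (χ : WeakDual.characterSpace ℂ S) (w : S),
      star w * w = 1 → ‖χ w‖ = 1 := by
    intro χ w hw
    have h1 : star (χ w) * χ w = 1 := by
      rw [← map_star, ← map_mul, hw, map_one]
    have h3 : ‖χ w‖ * ‖χ w‖ = 1 := by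
      rw [← CStarRing.norm_star_mul_self, h1, norm_one]
    rcases mul_self_eq_one_iff.mp h3 with h | h
    · exact h
    · have := norm_nonneg (χ w); linarith
  let Θ : WeakDual.characterSpace ℂ S → Torus2 := fun χ =>
    ((homeomorphCircle one_ne_zero).symm
        ⟨χ u', mem_sphere_zero_iff_norm.mpr (hchar χ u' hu'unit)⟩,
     (homeomorphCircle one_ne_zero).symm
        ⟨χ v', mem_sphere_zero_iff_norm.mpr (hchar χ v' hv'unit)⟩)
  have heval : ∀ w : S, Continuous fun χ : WeakDual.characterSpace ℂ S => χ w :=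
    fun w => (WeakDual.eval_continuous w).comp continuous_subtype_val
  have hΘcont : Continuous Θ := by
    refine Continuous.prodMk ?_ ?_
    · exact (homeomorphCircle one_ne_zero).symm.continuous.comp
        (Continuous.subtype_mk (heval u') _)
    · exact (homeomorphCircle one_ne_zero).symm.continuous.comp
        (Continuous.subtype_mk (heval v') _)
  let Θc : C(WeakDual.characterSpace ℂ S, Torus2) := ⟨Θ, hΘcont⟩
  let φ₀ : C(Torus2, ℂ) →⋆ₐ[ℂ] C(WeakDual.characterSpace ℂ S, ℂ) :=
    ContinuousMap.compStarAlgHom' ℂ ℂ Θc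
  let φ : C(Torus2, ℂ) →⋆ₐ[ℂ] B :=
    (S.subtype).comp
      (((gelfandStarTransform S).symm : C(WeakDual.characterSpace ℂ S, ℂ) →⋆ₐ[ℂ] S).comp φ₀)
  have hφc : Continuous φ := map_continuous φ
  have hφ1 : φ coordU1 = u := by
    have h0 : φ₀ coordU1 = gelfandStarTransform S u' := by
      ext χ
      show (toCircle ((homeomorphCircle one_ne_zero).symm
        ⟨χ u', mem_sphere_zero_iff_norm.mpr (hchar χ u' hu'unit)⟩) : ℂ) = _
      rw [← homeomorphCircle_apply one_ne_zero]
      erw [Homeomorph.apply_symm_apply]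
      simp [gelfandStarTransform]
    show S.subtype ((gelfandStarTransform S).symm (φ₀ coordU1)) = u
    rw [h0, StarAlgEquiv.symm_apply_apply]
    rfl
  have hφ2 : φ coordU2 = v := by
    have h0 : φ₀ coordU2 = gelfandStarTransform S v' := by
      ext χ
      show (toCircle ((homeomorphCircle one_ne_zero).symm
        ⟨χ v', mem_sphere_zero_iff_norm.mpr (hchar χ v' hv'unit)⟩) : ℂ) = _
      rw [← homeomorphCircle_apply one_ne_zero]
      erw [Homeomorph.apply_symm_apply]
      simp [gelfandStarTransform]
    show S.subtype ((gelfandStarTransform S).symm (φ₀ coordU2)) = v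
    rw [h0, StarAlgEquiv.symm_apply_apply]
    rfl
  refine ⟨φ, ⟨hφc, hφ1, hφ2⟩, ?_⟩
  rintro ψ ⟨hψc, hψ1, hψ2⟩
  have htop : (StarAlgebra.adjoin ℂ ({coordU1, coordU2} : Set C(Torus2, ℂ))).topologicalClosure
      = ⊤ := by
    apply ContinuousMap.starSubalgebra_topologicalClosure_eq_top_of_separatesPoints
    intro p q hpq
    rw [Ne, Prod.ext_iff, not_and_or] at hpq
    rcases hpq with h | h
    · refine ⟨coordU1, ⟨coordU1, StarAlgebra.subset_adjoin ℂ _ (by simp), rfl⟩, ?_⟩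
      intro hc
      exact h (injective_toCircle one_ne_zero (Circle.coe_injective hc))
    · refine ⟨coordU2, ⟨coordU2, StarAlgebra.subset_adjoin ℂ _ (by simp), rfl⟩, ?_⟩
      intro hc
      exact h (injective_toCircle one_ne_zero (Circle.coe_injective hc))
  have hle : StarAlgebra.adjoin ℂ ({coordU1, coordU2} : Set C(Torus2, ℂ)) ≤
      StarAlgHom.equalizer ψ φ := by
    apply StarAlgHom.adjoin_le_equalizer
    rintro f (rfl | rfl)
    · rw [hψ1, hφ1]
    · rw [hψ2, hφ2]
  have hclosedEq : IsClosed (StarAlgHom.equalizer ψ φ : Set C(Torus2, ℂ)) :=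
    isClosed_eq hψc hφc
  have htople : (⊤ : StarSubalgebra ℂ C(Torus2, ℂ)) ≤ StarAlgHom.equalizer ψ φ :=
    htop ▸ StarSubalgebra.topologicalClosure_minimal hle hclosedEq
  exact StarAlgHom.ext fun f => htople (by trivial)
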